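/- Existence of an x-split: given sorted lists B_1,...,B_{tp} over a linear order with total length n and any 0 ≤ x ≤ n, there exist prefix lengths l_1,...,l_{tp} with Σ l_i = x such that every element among the first l_i elements of each B_i is ≤ every element among the remaining elements of each B_j (for all i, j). -/

import Mathlib

private lemma head_drop_le' {α : Type*} [Preorder α] {L : List α}
    (h : L.Pairwise (· ≤ ·)) {k : ℕ} (hk : k < L.length) :
    ∀ b ∈ L.drop k, L[k] ≤ b := by
  intro b hb
  have hs : (L.drop k).Pairwise (· ≤ ·) := h.sublist (List.drop_sublist _ _)
  rw [List.drop_eq_getElem_cons hk] at hb hs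
  rcases List.mem_cons.mp hb with hb | hb
  · exact le_of_eq (by simp [hb])
  · exact (List.pairwise_cons.mp hs).1 b hb

/-- Existence of an x-split: sorted blocks B_1, ..., B_N of total length n admit,
for any 0 ≤ x ≤ n, prefix lengths l_i summing to x such that every element of a
prefix is ≤ every element of any suffix. -/
theorem exists_x_split {α : Type*} [LinearOrder α] {N n : ℕ}
    (B : Fin N → List α) (hsorted : ∀ i, (B i).Pairwise (· ≤ ·))
    (hn : ∑ i, (B i).length = n) (x : ℕ) (hx : x ≤ n) :
    ∃ l : Fin N → ℕ,
      (∀ i, l i ≤ (B i).length) ∧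
      (∑ i, l i = x) ∧
      (∀ i j : Fin N, ∀ a ∈ (B i).take (l i), ∀ b ∈ (B j).drop (l j), a ≤ b) := by
  induction x with
  | zero =>
    exact ⟨fun _ => 0, fun i => Nat.zero_le _, by simp, by simp⟩
  | succ x ih =>
    obtain ⟨l, hlen, hsum, hle⟩ := ih (Nat.le_of_succ_le hx)
    -- some block has room
    have hex : ∃ i, l i < (B i).length := by
      by_contra hcon
      push_neg at hcon
      have : n ≤ x := by
        calc n = ∑ i, (B i).length := hn.symm
        _ ≤ ∑ i, l i := Finset.sum_le_sum (fun i _ => hcon i)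
        _ = x := hsum
      omega
    set S : Finset (Fin N) := Finset.univ.filter (fun i => l i < (B i).length) with hS
    have hSne : S.Nonempty := by
      obtain ⟨i, hi⟩ := hex
      exact ⟨i, by simp [hS, hi]⟩
    have hfS : ∀ i ∈ S, l i < (B i).length := by
      intro i hi; simpa [hS] using hi
    -- minimize the head of the remaining suffixes
    obtain ⟨j0, hj0S, hj0min⟩ := S.exists_min_image
      (fun i => (((B i).drop (l i)).head?.elim ⊤ (↑·) : WithTop α)) hSne
    have hj0lt : l j0 < (B j0).length := hfS j0 hj0S
    set a0 : α := (B j0)[l j0] with ha0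
    have hhead : ∀ i (hi : l i < (B i).length),
        (((B i).drop (l i)).head?.elim ⊤ (↑·) : WithTop α) = (((B i)[l i] : α) : WithTop α) := by
      intro i hi
      rw [List.drop_eq_getElem_cons hi]
      rfl
    -- a0 is ≤ every element of every suffix
    have ha0le : ∀ j : Fin N, ∀ b ∈ (B j).drop (l j), a0 ≤ b := by
      intro j b hb
      have hjlt : l j < (B j).length := by
        by_contra h
        push_neg at h
        rw [List.drop_eq_nil_of_le h] at hb
        simp at hb
      have hjS : j ∈ S := by simp [hS, hjlt]
      have := hj0min j hjS
      rw [hhead j0 hj0lt, hhead j hjlt] at this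
      have h1 : a0 ≤ (B j)[l j] := by exact_mod_cast this
      exact h1.trans (head_drop_le' (hsorted j) hjlt b hb)
    refine ⟨Function.update l j0 (l j0 + 1), ?_, ?_, ?_⟩
    · intro i
      rcases eq_or_ne i j0 with rfl | hne
      · simpa using hj0lt
      · simp [Function.update_of_ne hne, hlen i]
    · rw [Finset.sum_update_of_mem (Finset.mem_univ j0)]
      rw [← Finset.add_sum_erase _ l (Finset.mem_univ j0)] at hsum
      simp only [Finset.sdiff_singleton_eq_erase] at *
      omega
    · intro i j a ha b hb
      -- b is in the old suffix of B j
      have hb' : b ∈ (B j).drop (l j) := by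
        rcases eq_or_ne j j0 with rfl | hne
        · rw [Function.update_self] at hb
          have : (B j).drop (l j + 1) = ((B j).drop (l j)).drop 1 := by
            rw [List.drop_drop]
          rw [this] at hb
          exact List.drop_subset _ _ hb
        · rwa [Function.update_of_ne hne] at hb
      rcases eq_or_ne i j0 with rfl | hne
      · rw [Function.update_self, List.take_succ] at ha
        rcases List.mem_append.mp ha with ha | ha
        · exact hle i j a ha b hb'
        · have : a = a0 := by
            rw [List.getElem?_eq_getElem hj0lt] at ha
            simpa using ha
          rw [this]
          exact ha0le j b hb'
      · rw [Function.update_of_ne hne] at ha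
        exact hle i j a ha b hb'
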